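/- In the ring $R = k[s,x,y]/(xy(x-y)(x+y-sy))$ with $k$ of odd characteristic $p$, for any power $q = p^e$ ($e \geq 1$) and any $j$ with $2 \leq j \leq pq-1$, the image of $x^j y^{pq+1-j}$ lies in the ideal $(x^q, y^q)^p R$. Consequently, the image $z$ of $f = \sum_{j=2}^{pq-1} (-1)^j x^{pq+1-j} y^j$ lies in $I^{[q]} = ((x,y)^p)^{[q]} = (x^q,y^q)^p R$. -/

import Mathlib

open MvPolynomial

set_option maxHeartbeats 1000000

/-- Reduction modulo the relation `x³y = s·x²y² + (1-s)·x·y³`: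
`x^(n+2) y^b = (∑_{i<n+1}(s-1)^i) x² y^(b+n) + c · x y^(b+n+1)` for some `c`. -/
lemma stmt14_geom_red {R : Type*} [CommRing R] (x y s : R)
    (hrel : x^3*y = s*x^2*y^2 + (1-s)*x*y^3) :
    ∀ n b : ℕ, 1 ≤ b → ∃ c : R,
      x^(n+2) * y^b = (∑ i ∈ Finset.range (n+1), (s-1)^i) * (x^2 * y^(b+n))
        + c * (x * y^(b+n+1)) := by
  intro n
  induction n using Nat.strong_induction_on with
  | _ n ih =>
    match n with
    | 0 =>
      intro b _
      exact ⟨0, by simp⟩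
    | 1 =>
      intro b hb
      obtain ⟨b', rfl⟩ : ∃ b', b = b' + 1 := ⟨b-1, (Nat.succ_pred_eq_of_pos hb).symm⟩
      refine ⟨1 - s, ?_⟩
      rw [Finset.sum_range_succ, Finset.sum_range_one]
      linear_combination y^b' * hrel
    | (m+2) =>
      intro b hb
      obtain ⟨b', rfl⟩ : ∃ b', b = b' + 1 := ⟨b-1, (Nat.succ_pred_eq_of_pos hb).symm⟩
      obtain ⟨c1, h1⟩ := ih (m+1) (by omega) (b'+2) (by omega)
      obtain ⟨c2, h2⟩ := ih m (by omega) (b'+3) (by omega)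
      refine ⟨s*c1 + (1-s)*c2, ?_⟩
      rw [show m+2+1 = (m+1)+1+1 from rfl, Finset.sum_range_succ, Finset.sum_range_succ,
        Finset.sum_range_succ] at *
      linear_combination x^(m+1)*y^b' * hrel + s * h1 + (1-s) * h2

/-- Monomial membership in `(x^q, y^q)^p`. -/
lemma stmt14_mem_pow_span {R : Type*} [CommRing R] (x y : R) (q p i a b : ℕ)
    (hi : i ≤ p) (ha : i*q ≤ a) (hb : (p-i)*q ≤ b) :
    x^a * y^b ∈ (Ideal.span {x^q, y^q})^p := by
  have hx : x^q ∈ Ideal.span {x^q, y^q} := Ideal.subset_span (by simp)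
  have hy : y^q ∈ Ideal.span {x^q, y^q} := Ideal.subset_span (by simp)
  have key : (x^q)^i * (y^q)^(p-i) ∈ (Ideal.span {x^q,y^q})^p := by
    have h := Ideal.mul_mem_mul (Ideal.pow_mem_pow hx i) (Ideal.pow_mem_pow hy (p-i))
    rwa [← pow_add, Nat.add_sub_cancel' hi] at h
  have hxa : x^a = x^(a - i*q) * (x^q)^i := by
    rw [← pow_mul, mul_comm q i, ← pow_add, Nat.sub_add_cancel ha]
  have hyb : y^b = y^(b - (p-i)*q) * (y^q)^(p-i) := by
    rw [← pow_mul, mul_comm q (p-i), ← pow_add, Nat.sub_add_cancel hb]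
  have : x^a * y^b = (x^(a - i*q) * y^(b - (p-i)*q)) * ((x^q)^i * (y^q)^(p-i)) := by
    rw [hxa, hyb]; ring
  rw [this]
  exact Ideal.mul_mem_left _ _ key

/-- Main abstract lemma: given the relation and the char-p geometric sum identity,
all monomials `x^j y^(pq+1-j)` with `2 ≤ j ≤ pq-1` lie in `(x^q,y^q)^p`. -/
lemma stmt14_main_mem {R : Type*} [CommRing R] (x y s : R) (p q : ℕ)
    (hp : 2 ≤ p) (hq : 2 ≤ q)
    (hrel : x^3*y = s*x^2*y^2 + (1-s)*x*y^3)
    (hgeom : ∑ i ∈ Finset.range q, (s-1)^i = (s-2)^(q-1)) :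
    ∀ j, 2 ≤ j → j ≤ p*q - 1 → x^j * y^(p*q+1-j) ∈ (Ideal.span {x^q, y^q})^p := by
  have hM : 2*q ≤ p*q := Nat.mul_le_mul_right q hp
  have hsub : (p-1)*q = p*q - q := Nat.sub_one_mul p q
  have hxy : x * y^(p*q) ∈ (Ideal.span {x^q, y^q})^p := by
    have h := stmt14_mem_pow_span x y q p 0 1 (p*q) (Nat.zero_le p) (by simp) (by simp)
    simpa using h
  have hx2 : x^2 * y^(p*q - 1) ∈ (Ideal.span {x^q, y^q})^p := by
    obtain ⟨c1, h1⟩ := stmt14_geom_red x y s hrel (q-2) (p*q-q+1) (by omega)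
    obtain ⟨c2, h2⟩ := stmt14_geom_red x y s hrel (q-1) (p*q-q) (by omega)
    rw [show q-2+2 = q from by omega, show p*q-q+1+(q-2) = p*q-1 from by omega,
        show p*q-1+1 = p*q from by omega, show q-2+1 = q-1 from by omega] at h1
    rw [show q-1+2 = q+1 from by omega, show p*q-q+(q-1) = p*q-1 from by omega,
        show p*q-1+1 = p*q from by omega, show q-1+1 = q from by omega] at h2
    have m1 : x^q * y^(p*q-q+1) ∈ (Ideal.span {x^q, y^q})^p :=
      stmt14_mem_pow_span x y q p 1 q (p*q-q+1) (by omega) (by omega) (by omega)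
    have m2 : x^(q+1) * y^(p*q-q) ∈ (Ideal.span {x^q, y^q})^p :=
      stmt14_mem_pow_span x y q p 1 (q+1) (p*q-q) (by omega) (by omega) (by omega)
    have hu1 : (∑ i ∈ Finset.range (q-1), (s-1)^i) * (x^2*y^(p*q-1))
        ∈ (Ideal.span {x^q, y^q})^p := by
      have hh : (∑ i ∈ Finset.range (q-1), (s-1)^i) * (x^2*y^(p*q-1))
          = x^q * y^(p*q-q+1) - c1*(x*y^(p*q)) := by linear_combination -h1
      rw [hh]; exact Ideal.sub_mem _ m1 (Ideal.mul_mem_left _ c1 hxy)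
    have hu2 : (∑ i ∈ Finset.range q, (s-1)^i) * (x^2*y^(p*q-1))
        ∈ (Ideal.span {x^q, y^q})^p := by
      have hh : (∑ i ∈ Finset.range q, (s-1)^i) * (x^2*y^(p*q-1))
          = x^(q+1) * y^(p*q-q) - c2*(x*y^(p*q)) := by linear_combination -h2
      rw [hh]; exact Ideal.sub_mem _ m2 (Ideal.mul_mem_left _ c2 hxy)
    have hco : IsCoprime ((s-1)^(q-1)) ((s-2)^(q-1)) :=
      (show IsCoprime (s-1) (s-2) from ⟨1, -1, by ring⟩).pow
    obtain ⟨a, b, hab⟩ := hco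
    have hsum : ∑ i ∈ Finset.range q, (s-1)^i
        = (∑ i ∈ Finset.range (q-1), (s-1)^i) + (s-1)^(q-1) := by
      have h := Finset.sum_range_succ (fun i => (s-1)^i) (q-1)
      rwa [show (q-1)+1 = q from by omega] at h
    have h3 : (s-2)^(q-1) = ∑ i ∈ Finset.range q, (s-1)^i := hgeom.symm
    have key : x^2*y^(p*q-1)
        = (a * ((∑ i ∈ Finset.range q, (s-1)^i) * (x^2*y^(p*q-1)))
          - a * ((∑ i ∈ Finset.range (q-1), (s-1)^i) * (x^2*y^(p*q-1))))
          + b * ((∑ i ∈ Finset.range q, (s-1)^i) * (x^2*y^(p*q-1))) := by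
      linear_combination (-(x^2*y^(p*q-1))) * hab - (a*(x^2*y^(p*q-1))) * hsum
        + (b*(x^2*y^(p*q-1))) * h3
    rw [key]
    exact add_mem (sub_mem (Ideal.mul_mem_left _ a hu2) (Ideal.mul_mem_left _ a hu1))
      (Ideal.mul_mem_left _ b hu2)
  have main : ∀ m, m + 2 ≤ p*q → x^(m+1) * y^(p*q - m) ∈ (Ideal.span {x^q, y^q})^p := by
    intro m
    induction m using Nat.strong_induction_on with
    | _ m ih =>
      match m with
      | 0 => intro _; simpa using hxy
      | 1 => intro _; exact hx2
      | (m+2) =>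
        intro hm
        rw [show p*q - (m+2) = (p*q - (m+4)) + 2 from by omega]
        have hid : x^(m+2+1) * y^((p*q-(m+4))+2)
            = s*(x^(m+1+1)*y^((p*q-(m+4))+3)) + (1-s)*(x^(m+0+1)*y^((p*q-(m+4))+4)) := by
          linear_combination x^m*y^(p*q-(m+4)+1)*hrel
        rw [hid]
        have i1 := ih (m+1) (by omega) (by omega)
        have i2 := ih m (by omega) (by omega)
        rw [show p*q-(m+1) = (p*q-(m+4))+3 from by omega] at i1
        rw [show p*q-m = (p*q-(m+4))+4 from by omega] at i2
        exact add_mem (Ideal.mul_mem_left _ s i1) (Ideal.mul_mem_left _ (1-s) i2)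
  intro j hj2 hjle
  have h := main (j-1) (by omega)
  rwa [show (j-1)+1 = j from by omega, show p*q-(j-1) = p*q+1-j from by omega] at h

/-- In `R = k[s,x,y]/(g)` with `char k = p` odd, `q = p^e`: for `2 ≤ j ≤ pq-1`, the
image of `x^j y^(pq+1-j)` lies in `(x^q, y^q)^p R`; consequently the image of
`f = ∑_{j=2}^{pq-1} (-1)^j x^(pq+1-j) y^j` lies in `I^{[q]} = (x^q,y^q)^p R`. -/
theorem stmt_14 (k : Type*) [Field k] (p : ℕ) (hp : p.Prime) (hodd : p ≠ 2)
    [CharP k p] (e q : ℕ) (he : 1 ≤ e) (hq : q = p ^ e) :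
    (∀ j : ℕ, 2 ≤ j → j ≤ p * q - 1 →
      Ideal.Quotient.mk
          (Ideal.span {(X 1 : MvPolynomial (Fin 3) k) * X 2 * (X 1 - X 2) *
            (X 1 + X 2 - X 0 * X 2)})
          (X 1 ^ j * X 2 ^ (p * q + 1 - j)) ∈
        (Ideal.span
          {Ideal.Quotient.mk
            (Ideal.span {(X 1 : MvPolynomial (Fin 3) k) * X 2 * (X 1 - X 2) *
              (X 1 + X 2 - X 0 * X 2)}) (X 1 ^ q),
           Ideal.Quotient.mk
            (Ideal.span {(X 1 : MvPolynomial (Fin 3) k) * X 2 * (X 1 - X 2) *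
              (X 1 + X 2 - X 0 * X 2)}) (X 2 ^ q)}) ^ p) ∧
    Ideal.Quotient.mk
        (Ideal.span {(X 1 : MvPolynomial (Fin 3) k) * X 2 * (X 1 - X 2) *
          (X 1 + X 2 - X 0 * X 2)})
        (∑ j ∈ Finset.Icc 2 (p * q - 1),
          (-1 : MvPolynomial (Fin 3) k) ^ j * X 1 ^ (p * q + 1 - j) * X 2 ^ j) ∈
      (Ideal.span
        {Ideal.Quotient.mk
          (Ideal.span {(X 1 : MvPolynomial (Fin 3) k) * X 2 * (X 1 - X 2) *
            (X 1 + X 2 - X 0 * X 2)}) (X 1 ^ q),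
         Ideal.Quotient.mk
          (Ideal.span {(X 1 : MvPolynomial (Fin 3) k) * X 2 * (X 1 - X 2) *
            (X 1 + X 2 - X 0 * X 2)}) (X 2 ^ q)}) ^ p := by
  haveI : Fact p.Prime := ⟨hp⟩
  set G : MvPolynomial (Fin 3) k :=
    (X 1 : MvPolynomial (Fin 3) k) * X 2 * (X 1 - X 2) * (X 1 + X 2 - X 0 * X 2) with hGdef
  set I : Ideal (MvPolynomial (Fin 3) k) := Ideal.span {G} with hIdef
  set mk := Ideal.Quotient.mk I with hmk
  set x := mk (X 1) with hx
  set y := mk (X 2) with hy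
  set s := mk (X 0) with hs
  have hp2 : 2 ≤ p := hp.two_le
  have hq2 : 2 ≤ q := by
    rw [hq]; calc 2 ≤ p := hp2
      _ ≤ p^e := Nat.le_self_pow (by omega) p
  have hpq4 : 4 ≤ p*q := by
    calc 4 = 2*2 := rfl
      _ ≤ p*q := Nat.mul_le_mul hp2 hq2
  have h0 : mk G = 0 := Ideal.Quotient.eq_zero_iff_mem.mpr (Ideal.subset_span rfl)
  have hrel : x^3*y = s*x^2*y^2 + (1-s)*x*y^3 := by
    have hpoly : (X 1 : MvPolynomial (Fin 3) k)^3*(X 2)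
        - (X 0*(X 1)^2*(X 2)^2 + (1-X 0)*(X 1)*(X 2)^3) = G := by rw [hGdef]; ring
    have h := congrArg mk hpoly
    rw [h0] at h
    simp only [map_sub, map_add, map_mul, map_pow, map_one, ← hx, ← hy, ← hs] at h
    linear_combination h
  have h2k : (2:k) ≠ 0 := by
    intro h
    have h2 : ((2:ℕ):k) = 0 := by exact_mod_cast h
    have := (CharP.cast_eq_zero_iff k p 2).mp h2
    exact hodd ((Nat.prime_dvd_prime_iff_eq hp Nat.prime_two).mp this)
  have hX : (X 0 : MvPolynomial (Fin 3) k) - 2 ≠ 0 := by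
    intro h
    have h' := congrArg constantCoeff h
    simp only [map_sub, constantCoeff_X, map_ofNat, map_zero] at h'
    exact h2k (by linear_combination -h')
  have hgeomA : (∑ i ∈ Finset.range q, ((X 0:MvPolynomial (Fin 3) k) - 1)^i)
      = (X 0 - 2)^(q-1) := by
    have e1 : ((X 0:MvPolynomial (Fin 3) k) - 1) - 1 = X 0 - 2 := by ring
    have e2 : ((X 0:MvPolynomial (Fin 3) k) - 1)^q - 1 = ((X 0 - 1) - 1)^q := by
      subst hq
      rw [sub_pow_char_pow ((X 0:MvPolynomial (Fin 3) k) - 1) 1 e, one_pow]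
    have e3 := geom_sum_mul ((X 0:MvPolynomial (Fin 3) k) - 1) q
    rw [e1, e2, e1] at e3
    apply mul_right_cancel₀ hX
    rw [e3, ← pow_succ, show q-1+1 = q from by omega]
  have hgeom : ∑ i ∈ Finset.range q, (s-1)^i = (s-2)^(q-1) := by
    have h := congrArg mk hgeomA
    simpa only [map_sum, map_pow, map_sub, map_one, map_ofNat, ← hs] using h
  have part1 := stmt14_main_mem x y s p q hp2 hq2 hrel hgeom
  simp only [map_mul, map_pow, map_sum, ← hx, ← hy, ← hs]
  constructor
  · intro j hj2 hjle
    exact part1 j hj2 hjle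
  · refine Ideal.sum_mem _ (fun j hj => ?_)
    simp only [Finset.mem_Icc] at hj
    have h := part1 (p*q+1-j) (by omega) (by omega)
    rw [show p*q+1-(p*q+1-j) = j from by omega] at h
    rw [mul_assoc]
    exact Ideal.mul_mem_left _ _ h
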